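/- For every t ≥ 3 and n ≥ 2t-2, there exists a triangle-free S_t-saturated graph on n vertices. -/

import Mathlib

open SimpleGraph

/-- Degree of a vertex, via `Set.ncard` (avoids decidability assumptions). -/
noncomputable def ndeg {V : Type*} (G : SimpleGraph V) (v : V) : ℕ :=
  (G.neighborSet v).ncard

/-- A graph contains a copy of the star `S_t` (with `t` edges) iff some vertex
has degree at least `t`. -/
def ContainsStar {V : Type*} (G : SimpleGraph V) (t : ℕ) : Prop :=
  ∃ v, t ≤ ndeg G v

/-- `G` is `S_t`-saturated: it contains no copy of `S_t`, but adding any missing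
edge creates one. -/
def StarSaturated {V : Type*} (G : SimpleGraph V) (t : ℕ) : Prop :=
  ¬ ContainsStar G t ∧
    ∀ u v : V, u ≠ v → ¬ G.Adj u v → ContainsStar (G ⊔ SimpleGraph.edge u v) t

/-- Bipartite circulant graph: `inl a ~ inr (a+k)` for `k < d`. -/
def Bgraph (m d : ℕ) : SimpleGraph (ZMod m ⊕ ZMod m) where
  Adj x y := ∃ (a b : ZMod m) (k : ℕ), k < d ∧ b = a + (k : ZMod m) ∧
      ((x = Sum.inl a ∧ y = Sum.inr b) ∨ (x = Sum.inr b ∧ y = Sum.inl a))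
  symm := by
    constructor
    rintro x y ⟨a, b, k, hk, hb, h | h⟩ <;> exact ⟨a, b, k, hk, hb, by tauto⟩
  loopless := by
    constructor
    rintro x ⟨a, b, k, hk, hb, ⟨h1, h2⟩ | ⟨h1, h2⟩⟩ <;> subst h1 <;> simp_all

lemma Bgraph_adj (m d : ℕ) (x y : ZMod m ⊕ ZMod m) :
    (Bgraph m d).Adj x y ↔ ∃ (a b : ZMod m) (k : ℕ), k < d ∧ b = a + (k : ZMod m) ∧
      ((x = Sum.inl a ∧ y = Sum.inr b) ∨ (x = Sum.inr b ∧ y = Sum.inl a)) := Iff.rfl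

lemma nbB_inl (m d : ℕ) (a : ZMod m) :
    (Bgraph m d).neighborSet (Sum.inl a)
      = (fun k : ℕ => Sum.inr (a + (k : ZMod m))) '' Set.Iio d := by
  ext y
  simp only [mem_neighborSet, Bgraph_adj, Set.mem_image, Set.mem_Iio]
  constructor
  · rintro ⟨a', b, k, hk, hb, ⟨h1, h2⟩ | ⟨h1, h2⟩⟩
    · obtain rfl : a = a' := by injection h1
      exact ⟨k, hk, by rw [← hb, h2]⟩
    · simp at h1
  · rintro ⟨k, hk, rfl⟩
    exact ⟨a, a + k, k, hk, rfl, Or.inl ⟨rfl, rfl⟩⟩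

lemma nbB_inr (m d : ℕ) (b : ZMod m) :
    (Bgraph m d).neighborSet (Sum.inr b)
      = (fun k : ℕ => Sum.inl (b - (k : ZMod m))) '' Set.Iio d := by
  ext y
  simp only [mem_neighborSet, Bgraph_adj, Set.mem_image, Set.mem_Iio]
  constructor
  · rintro ⟨a, b', k, hk, hb, ⟨h1, h2⟩ | ⟨h1, h2⟩⟩
    · simp at h1
    · obtain rfl : b = b' := by injection h1
      refine ⟨k, hk, ?_⟩
      rw [h2, hb]
      congr 1
      ring
  · rintro ⟨k, hk, rfl⟩
    exact ⟨b - k, b, k, hk, by ring, Or.inr ⟨rfl, rfl⟩⟩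

lemma ncard_Iio (d : ℕ) : (Set.Iio d).ncard = d := by
  rw [← Finset.coe_range, Set.ncard_coe_finset, Finset.card_range]

lemma ndeg_B (m d : ℕ) [NeZero m] (hdm : d ≤ m) (x : ZMod m ⊕ ZMod m) :
    ndeg (Bgraph m d) x = d := by
  have hinj : ∀ k₁ ∈ Set.Iio d, ∀ k₂ ∈ Set.Iio d,
      (k₁ : ZMod m) = (k₂ : ZMod m) → k₁ = k₂ := by
    intro k₁ h₁ k₂ h₂ h
    have := congrArg ZMod.val h
    rwa [ZMod.val_cast_of_lt (lt_of_lt_of_le h₁ hdm),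
      ZMod.val_cast_of_lt (lt_of_lt_of_le h₂ hdm)] at this
  cases x with
  | inl a =>
    rw [ndeg, nbB_inl, Set.ncard_image_of_injOn, ncard_Iio]
    intro k₁ h₁ k₂ h₂ h
    exact hinj k₁ h₁ k₂ h₂ (add_left_cancel (Sum.inr.inj h))
  | inr b =>
    rw [ndeg, nbB_inr, Set.ncard_image_of_injOn, ncard_Iio]
    intro k₁ h₁ k₂ h₂ h
    have h' := Sum.inl.inj h
    refine hinj k₁ h₁ k₂ h₂ ?_
    rw [← sub_sub_cancel b (k₁ : ZMod m), h', sub_sub_cancel]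

theorem stmt1 (t n : ℕ) (ht : 3 ≤ t) (hn : 2 * t - 2 ≤ n) :
    ∃ G : SimpleGraph (Fin n), G.CliqueFree 3 ∧ StarSaturated G t := by
  classical
  obtain ⟨d, rfl⟩ : ∃ d, t = d + 1 := ⟨t - 1, by omega⟩
  set m := n / 2 with hm_def
  have hdm : d ≤ m := by omega
  have h2m : 2 * m ≤ n := by omega
  have hr : n ≤ 2 * m + 1 := by omega
  haveI : NeZero m := ⟨by omega⟩
  have hcard : Fintype.card (ZMod m ⊕ ZMod m) ≤ Fintype.card (Fin n) := by
    simp [ZMod.card]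
    omega
  obtain ⟨f⟩ := Function.Embedding.nonempty_of_card_le hcard
  set B := Bgraph m d with hB
  set G := B.map f with hG
  have hnb : ∀ x, G.neighborSet (f x) = f '' B.neighborSet x := by
    intro x; ext w
    simp only [mem_neighborSet, hG, map_adj, Set.mem_image]
    constructor
    · rintro ⟨a, b, hab, ha, hb⟩
      obtain rfl : a = x := f.injective ha
      exact ⟨b, hab, hb⟩
    · rintro ⟨b, hab, hb⟩; exact ⟨x, b, hab, rfl, hb⟩
  have hdeg : ∀ x, ndeg G (f x) = d := by
    intro x
    rw [ndeg, hnb, Set.ncard_image_of_injective _ f.injective]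
    exact ndeg_B m d hdm x
  have hdeg0 : ∀ v : Fin n, v ∉ Set.range f → ndeg G v = 0 := by
    intro v hv
    have h : G.neighborSet v = ∅ := by
      ext w
      simp only [mem_neighborSet, hG, map_adj, Set.mem_empty_iff_false, iff_false]
      rintro ⟨a, b, hab, ha, hb⟩
      exact hv ⟨a, ha⟩
    rw [ndeg, h, Set.ncard_empty]
  refine ⟨G, ?_, ?_, ?_⟩
  · -- triangle-free
    have hcol : G.Colorable 2 := by
      refine ⟨Coloring.mk (fun v => if ∃ a, f (Sum.inl a) = v then 0 else 1) ?_⟩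
      intro u w huw
      obtain ⟨x, y, hxy, hx, hy⟩ := (map_adj f B u w).1 huw
      obtain ⟨a, b, k, hk, hb, ⟨h1, h2⟩ | ⟨h1, h2⟩⟩ := hxy <;> subst h1 <;> subst h2 <;>
        subst hx <;> subst hy
      · rw [if_pos ⟨a, rfl⟩, if_neg]
        · simp
        · rintro ⟨a', ha'⟩
          exact absurd (f.injective ha') (by simp)
      · rw [if_neg (by rintro ⟨a', ha'⟩; exact absurd (f.injective ha') (by simp)),
          if_pos ⟨a, rfl⟩]
        simp
    exact hcol.cliqueFree (by norm_num)
  · -- no star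
    rintro ⟨v, hv⟩
    rcases em (v ∈ Set.range f) with ⟨x, rfl⟩ | h
    · rw [hdeg x] at hv; omega
    · rw [hdeg0 v h] at hv; omega
  · -- saturation
    have key : ∀ u v : Fin n, u ≠ v → ¬ G.Adj u v → u ∈ Set.range f →
        ContainsStar (G ⊔ SimpleGraph.edge u v) (d + 1) := by
      rintro u v huv hadj ⟨x, rfl⟩
      refine ⟨f x, ?_⟩
      have h1 : (G ⊔ SimpleGraph.edge (f x) v).neighborSet (f x)
          = insert v (G.neighborSet (f x)) := by
        ext w
        rw [mem_neighborSet, sup_adj, edge_adj, Set.mem_insert_iff]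
        constructor
        · rintro (h | ⟨⟨_, rfl⟩ | ⟨h2, rfl⟩, hne⟩)
          · exact Or.inr h
          · exact Or.inl rfl
          · exact absurd rfl hne
        · rintro (rfl | h)
          · exact Or.inr ⟨Or.inl ⟨rfl, rfl⟩, huv⟩
          · exact Or.inl h
      have hv_notmem : v ∉ G.neighborSet (f x) := fun h => hadj h
      rw [ndeg, h1, Set.ncard_insert_of_notMem hv_notmem (Set.toFinite _)]
      have := hdeg x
      rw [ndeg] at this
      omega
    intro u v huv hadj
    have hrange : u ∈ Set.range f ∨ v ∈ Set.range f := by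
      by_contra hcon
      push_neg at hcon
      obtain ⟨hu, hv⟩ := hcon
      have hcardr : (Set.range ⇑f).ncard = 2 * m := by
        rw [← Nat.card_coe_set_eq, Nat.card_range_of_injective f.injective]
        simp [Nat.card_eq_fintype_card, ZMod.card]
        omega
      have hle : (insert u (insert v (Set.range ⇑f))).ncard ≤ n := by
        have h1 : (insert u (insert v (Set.range ⇑f))).ncard
            ≤ (Set.univ : Set (Fin n)).ncard :=
          Set.ncard_le_ncard (Set.subset_univ _) (Set.toFinite _)
        rwa [Set.ncard_univ, Nat.card_eq_fintype_card, Fintype.card_fin] at h1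
      rw [Set.ncard_insert_of_notMem (by simp [hu, huv]) (Set.toFinite _),
        Set.ncard_insert_of_notMem hv (Set.toFinite _), hcardr] at hle
      omega
    rcases hrange with hu | hv
    · exact key u v huv hadj hu
    · have h := key v u huv.symm (fun h => hadj h.symm) hv
      have he : SimpleGraph.edge v u = SimpleGraph.edge u v := by
        ext a b
        rw [edge_adj, edge_adj]
        tauto
      rwa [he] at h
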